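/- (Kernel of a dressed check matrix.) Let H ∈ 𝔽₂^{r×m}, G_a ∈ 𝔽₂^{p×m}, G_b ∈ 𝔽₂^{s×m} be such that the rows of the stacked matrix (G_a; G_b) are linearly independent and rs(G_a; G_b) = ker H. Let D ∈ 𝔽₂^{s×m} satisfy D G_aᵀ = 0 and D G_bᵀ = E_s. Then the right kernel of the stacked matrix (H; D) equals rs G_a; that is, a vector v ∈ 𝔽₂^m satisfies H vᵀ = 0 and D vᵀ = 0 if and only if v ∈ rs G_a. -/

import Mathlib

open Matrix

private lemma mulVec_row {a b m : ℕ} (D : Matrix (Fin a) (Fin m) (ZMod 2))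
    (G : Matrix (Fin b) (Fin m) (ZMod 2)) (i : Fin b) :
    D.mulVec (G i) = fun k => (D * Gᵀ) k i := by
  ext k
  simp [Matrix.mul_apply, Matrix.mulVec, dotProduct, Matrix.transpose_apply]

/-- The row space (𝔽₂-span of the rows) of a matrix. -/
def rowSpan {ι κ : Type*} (A : Matrix ι κ (ZMod 2)) :
    Submodule (ZMod 2) (κ → ZMod 2) :=
  Submodule.span (ZMod 2) (Set.range A)

/-- kernel of a dressed check matrix. If the rows of the stacked
matrix `(G_a; G_b)` are independent and span `ker H`, and `D G_aᵀ = 0`,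
`D G_bᵀ = E_s`, then the right kernel of `(H; D)` equals `rs G_a`. -/
theorem dressed_check_matrix_kernel {r m p s : ℕ}
    (H : Matrix (Fin r) (Fin m) (ZMod 2))
    (Ga : Matrix (Fin p) (Fin m) (ZMod 2))
    (Gb : Matrix (Fin s) (Fin m) (ZMod 2))
    (hli : LinearIndependent (ZMod 2) (Sum.elim Ga Gb))
    (hspan : Submodule.span (ZMod 2) (Set.range (Sum.elim Ga Gb)) =
      LinearMap.ker H.mulVecLin)
    (D : Matrix (Fin s) (Fin m) (ZMod 2))
    (hDa : D * Gaᵀ = 0)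
    (hDb : D * Gbᵀ = 1) :
    ∀ v : Fin m → ZMod 2,
      (H.mulVec v = 0 ∧ D.mulVec v = 0) ↔ v ∈ rowSpan Ga := by
  simp only [rowSpan]
  intro v
  change _ ↔ v ∈ Submodule.span (ZMod 2) (Set.range (fun i => Ga i))
  constructor
  · rintro ⟨hH, hD⟩
    have hv : v ∈ Submodule.span (ZMod 2) (Set.range (Sum.elim Ga Gb)) := by
      rw [hspan]; exact hH
    rw [Submodule.mem_span_range_iff_exists_fun] at hv
    obtain ⟨c, hc⟩ := hv
    rw [Fintype.sum_sum_type] at hc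
    change ∑ i, c (Sum.inl i) • Ga i + ∑ j, c (Sum.inr j) • Gb j = v at hc
    -- compute D.mulVec v
    have hDv : D.mulVec v = fun k => c (Sum.inr k) := by
      rw [← hc]
      ext k
      have : D.mulVec (∑ i : Fin p, c (Sum.inl i) • Ga i
          + ∑ j : Fin s, c (Sum.inr j) • Gb j)
          = ∑ i : Fin p, c (Sum.inl i) • D.mulVec (Ga i)
          + ∑ j : Fin s, c (Sum.inr j) • D.mulVec (Gb j) := by
        simp only [← Matrix.mulVecLin_apply, map_add, map_sum, _root_.map_smul]
      rw [this]
      simp only [mulVec_row D Ga, mulVec_row D Gb, hDa, hDb]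
      simp [Matrix.one_apply, Finset.sum_ite_eq']
    have hcr : ∀ j, c (Sum.inr j) = 0 := by
      intro j
      have := congrFun (hDv.symm.trans hD) j
      simpa using this
    rw [Submodule.mem_span_range_iff_exists_fun]
    refine ⟨fun i => c (Sum.inl i), ?_⟩
    rw [← hc]
    simp [hcr]
  · intro hv
    rw [Submodule.mem_span_range_iff_exists_fun] at hv
    obtain ⟨c, hc⟩ := hv
    constructor
    · have : v ∈ LinearMap.ker H.mulVecLin := by
        rw [← hspan]
        rw [← hc]
        exact Submodule.sum_mem _ fun i _ => Submodule.smul_mem _ _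
          (Submodule.subset_span ⟨Sum.inl i, rfl⟩)
      exact this
    · rw [← hc]
      have : D.mulVec (∑ i : Fin p, c i • Ga i)
          = ∑ i : Fin p, c i • D.mulVec (Ga i) := by
        simp only [← Matrix.mulVecLin_apply, map_sum, _root_.map_smul]
      rw [this]
      simp only [mulVec_row D Ga, hDa]
      ext k
      simp
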